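/- Weight adaptation to a left-hand discontinuity (Proposition): let r ≥ 2, t = 2r−1, 1 ≤ l₀ ≤ r−1, L ≥ 0, and 0 < m ≤ M₀. There exist constants M > 0 and h₀ > 0, depending only on r, l₀, L, m, M₀, such that for every 0 < h < h₀, every x₀ ∈ ℝ, every integer j, and every f : ℝ → ℝ satisfying m ≤ |f(x_{j−l₀}) − f(x_{j−l₀−1})| ≤ M₀ and |f(x_{j+ξ}) − f(x_{j+ξ−1})| ≤ L·h for all ξ ≠ −l₀ with −r+1 ≤ ξ ≤ r−1, the nonlinear weights satisfy 0 ≤ ω_k ≤ M·h^{t} for 0 ≤ k ≤ r−l₀−1, and |ω_k − C^{r+l₀-1}_{l₀-1, r-1-k}| ≤ M·h^{t} for r−l₀ ≤ k ≤ r−1. -/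

import Mathlib

/-- The node `x_m = x₀ + m·h`. -/
noncomputable def nd (h x₀ : ℝ) (m : ℤ) : ℝ := x₀ + (m : ℝ) * h

/-- Value at the midpoint `x₀ + (j - 1/2)·h` of the Lagrange interpolant of `f`
at the `a+1` equally spaced nodes `x_{j+b-a}, …, x_{j+b}` where `x_m = x₀ + m·h`. -/
noncomputable def Pval (h x₀ : ℝ) (j a b : ℤ) (f : ℝ → ℝ) : ℝ :=
  (Lagrange.interpolate (Finset.Icc (j + b - a) (j + b)) (fun m : ℤ => x₀ + (m : ℝ) * h)
    (fun m : ℤ => f (x₀ + (m : ℝ) * h))).eval (x₀ + ((j : ℝ) - 1 / 2) * h)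

/-- The classical optimal weights `C^{2r-1}_{r-1,k} = 2^{-(2r-1)} · C(2r, 2k+1)`. -/
noncomputable def Copt (r k : ℕ) : ℝ :=
  (1 / 2 ^ (2 * r - 1)) * (Nat.choose (2 * r) (2 * k + 1) : ℝ)

/-- The general optimal weights `C^{r+l-1}_{l-1,k}`, for `1 ≤ l ≤ r` and `0 ≤ k ≤ l-1`. -/
noncomputable def C1 (r l k : ℕ) : ℝ :=
  (1 / 2 ^ (2 * l)) * (((r : ℝ) + (l : ℝ)) / (l : ℝ)) *
    (((l : ℝ) - (k : ℝ)) / ((r : ℝ) - (k : ℝ))) *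
    (Nat.choose l k : ℝ) * ((Nat.choose r k : ℝ))⁻¹ * (Nat.choose (2 * l) l : ℝ) *
    ((Nat.choose (l + r) r : ℝ))⁻¹ * (Nat.choose (2 * r) (2 * k + 1) : ℝ)

/-- The smoothness indicators `J_ξ = |f(x_{j+ξ}) − f(x_{j+ξ-1})|^{2t}` with `t = 2r-1`. -/
noncomputable def Jf (h x₀ : ℝ) (j : ℤ) (r : ℕ) (f : ℝ → ℝ) (ξ : ℤ) : ℝ :=
  |f (nd h x₀ (j + ξ)) - f (nd h x₀ (j + ξ - 1))| ^ (2 * (2 * r - 1))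

/-- The nonlinear weight numerators
`α_k = C^{2r-1}_{r-1,k} + h^{-(2r-1)}·(Σ_{l=k+1}^{r-1} C^{r+l-1}_{l-1,k} J_l
  + Σ_{l=0}^{k-1} C^{2r-l-2}_{r-1,k} J_{l-r+1})`,
where the reflected weight `C^{2r-l-2}_{r-1,k}` equals `C1 r (r-l-1) (r-1-k)`. -/
noncomputable def alphaW (h x₀ : ℝ) (j : ℤ) (r : ℕ) (f : ℝ → ℝ) (k : ℕ) : ℝ :=
  Copt r k + (h ^ (2 * r - 1))⁻¹ *
    ((∑ l ∈ Finset.Icc (k + 1) (r - 1), C1 r l k * Jf h x₀ j r f (l : ℤ)) +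
      ∑ l ∈ Finset.range k, C1 r (r - l - 1) (r - 1 - k) * Jf h x₀ j r f ((l : ℤ) - (r : ℤ) + 1))

/-- The nonlinear weights `ω_k = α_k / (α_0 + ⋯ + α_{r-1})`. -/
noncomputable def omegaW (h x₀ : ℝ) (j : ℤ) (r : ℕ) (f : ℝ → ℝ) (k : ℕ) : ℝ :=
  alphaW h x₀ j r f k / ∑ i ∈ Finset.range r, alphaW h x₀ j r f i

open PowerSeries Finset

noncomputable def Gs (d : ℕ) : PowerSeries ℤ :=
  PowerSeries.mk (fun n => if Even n then ((d + n/2).choose d : ℤ) else 0)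

lemma coeff_mul_one_sub_X_sq (φ : PowerSeries ℤ) (n : ℕ) :
    (PowerSeries.coeff n) (φ * (1 - X^2)) =
      (PowerSeries.coeff n) φ - if 2 ≤ n then (PowerSeries.coeff (n-2)) φ else 0 := by
  rw [mul_sub, mul_one, map_sub, PowerSeries.coeff_mul_X_pow']

lemma Gs_zero_mul : Gs 0 * (1 - X^2) = 1 := by
  ext n
  rw [coeff_mul_one_sub_X_sq]
  rcases n with _ | _ | n
  · simp [Gs]
  · simp [Gs]
  · simp only [Gs, PowerSeries.coeff_mk, show (n+1+1) - 2 = n by omega]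
    have : Even (n+1+1) ↔ Even n := by
      rw [Nat.even_iff, Nat.even_iff]; omega
    by_cases he : Even n
    · simp [this.mpr he, he, PowerSeries.coeff_one, Nat.choose_zero_right]
    · have h1 : ¬ Even (n+1+1) := by rw [this]; exact he
      simp [h1, he, PowerSeries.coeff_one]

lemma Gs_succ_mul (d : ℕ) : Gs (d+1) * (1 - X^2) = Gs d := by
  ext n
  rw [coeff_mul_one_sub_X_sq]
  rcases n with _ | _ | n
  · simp [Gs]
  · simp [Gs]
  · simp only [Gs, PowerSeries.coeff_mk, show (n+1+1) - 2 = n by omega,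
      show 2 ≤ n + 1 + 1 by omega, if_true]
    have hpar : Even (n+1+1) ↔ Even n := by rw [Nat.even_iff, Nat.even_iff]; omega
    by_cases he : Even n
    · simp only [if_pos he, if_pos (hpar.mpr he)]
      have hdiv : (n+1+1)/2 = n/2 + 1 := by omega
      rw [hdiv]
      have : (d + 1 + (n/2 + 1)).choose (d+1) = (d + n/2 + 1).choose (d+1) + (d + n/2 + 1).choose d := by
        rw [show d + 1 + (n/2 + 1) = (d + n/2 + 1) + 1 by omega]
        rw [Nat.choose_succ_succ' (d + n/2 + 1) d, Nat.add_comm]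
      have h2 : d + 1 + n/2 = d + n/2 + 1 := by omega
      push_cast [this, h2]
      ring
    · simp only [if_neg he, if_neg (fun hh => he (hpar.mp hh)), sub_zero]

lemma Gs_mul_pow (d : ℕ) : Gs d * (1 - X^2)^(d+1) = 1 := by
  induction d with
  | zero => rw [pow_one]; exact Gs_zero_mul
  | succ d ih =>
      rw [pow_succ, show Gs (d+1) * ((1 - X^2)^(d+1) * (1 - X^2)) =
        (Gs (d+1) * (1 - X^2)) * (1 - X^2)^(d+1) by ring, Gs_succ_mul, ih]

lemma onePlusX_mul_Gs (d : ℕ) :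
    (1 + X)^(d+1) * Gs d = PowerSeries.mk (fun n => ((d + n).choose d : ℤ)) := by
  have hu := PowerSeries.invOneSubPow_val_succ_eq_mk_add_choose (d := d) (S := ℤ)
  set u := PowerSeries.invOneSubPow ℤ (d+1) with hudef
  have huinv : u.inv = (1 - X : PowerSeries ℤ)^(d+1) := PowerSeries.invOneSubPow_inv_eq_one_sub_pow ℤ (d+1)
  have key : ((1 + X)^(d+1) * Gs d) * u.inv = 1 := by
    rw [huinv, show ((1 + X)^(d+1) * Gs d) * (1 - X : PowerSeries ℤ)^(d+1)
      = Gs d * ((1+X)*(1-X))^(d+1) by rw [mul_pow]; ring,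
      show ((1+X)*(1-X) : PowerSeries ℤ) = 1 - X^2 by ring]
    exact Gs_mul_pow d
  calc (1 + X)^(d+1) * Gs d = ((1 + X)^(d+1) * Gs d) * (u.inv * u.val) := by
        rw [u.inv_val, mul_one]
    _ = (((1 + X)^(d+1) * Gs d) * u.inv) * u.val := by ring
    _ = u.val := by rw [key, one_mul]
    _ = _ := hu

lemma coeff_onePlusX_pow (n k : ℕ) :
    (PowerSeries.coeff k) ((1 + X)^n) = (n.choose k : ℤ) := by
  have : ((1 + X : PowerSeries ℤ)) = ((Polynomial.X + 1 : Polynomial ℤ) : PowerSeries ℤ) := by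
    simp [add_comm]
  rw [this, ← Polynomial.coe_pow, Polynomial.coeff_coe, Polynomial.coeff_X_add_one_pow]

lemma sum_range_two_mul {M : Type*} [AddCommMonoid M] (n : ℕ) (f : ℕ → M) :
    ∑ i ∈ range (2*n), f i = (∑ k ∈ range n, f (2*k)) + ∑ k ∈ range n, f (2*k+1) := by
  induction n with
  | zero => simp
  | succ n ih =>
      rw [show 2*(n+1) = (2*n) + 1 + 1 by omega, Finset.sum_range_succ, Finset.sum_range_succ,
        ih, Finset.sum_range_succ, Finset.sum_range_succ]
      abel

lemma key_nat (r l : ℕ) (hl1 : 1 ≤ l) (hl2 : l ≤ r) :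
    ∑ k ∈ range l, (r-1-k).choose (r-l) * (2*r).choose (2*k+1)
      = 2^(2*l-1) * (r+l-1).choose (2*l-1) := by
  set d := r - l with hd
  set a := r + l - 1 with ha
  set s := 2*l - 1 with hs
  -- two evaluations of the coefficient of X^s in (1+X)^(2r) * Gs d
  have e1 : (PowerSeries.coeff s) ((1+X)^(2*r) * Gs d)
      = ∑ k ∈ range l, ((r-1-k).choose (r-l) * (2*r).choose (2*k+1) : ℤ) := by
    rw [PowerSeries.coeff_mul, Finset.Nat.sum_antidiagonal_eq_sum_range_succ_mk,
      show s.succ = 2*l by omega, sum_range_two_mul]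
    have hzero : ∀ k ∈ range l,
        (PowerSeries.coeff (2*k)) ((1+X)^(2*r)) * (PowerSeries.coeff (s - 2*k)) (Gs d) = 0 := by
      intro k hk
      have hk' : k < l := Finset.mem_range.mp hk
      have : ¬ Even (s - 2*k) := by rw [Nat.even_iff]; omega
      simp [Gs, this]
    rw [Finset.sum_congr rfl hzero, Finset.sum_const_zero, zero_add]
    refine Finset.sum_congr rfl (fun k hk => ?_)
    have hk' : k < l := Finset.mem_range.mp hk
    have hev : Even (s - (2*k+1)) := by rw [Nat.even_iff]; omega
    rw [coeff_onePlusX_pow]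
    simp only [Gs, PowerSeries.coeff_mk, if_pos hev]
    have h1 : (s - (2*k+1))/2 = l - 1 - k := by omega
    have h2 : d + (l - 1 - k) = r - 1 - k := by omega
    rw [h1, h2]
    push_cast
    ring
  have e2 : (PowerSeries.coeff s) ((1+X)^(2*r) * Gs d)
      = (a.choose s * 2^s : ℤ) := by
    have hsplit : ((1+X) : PowerSeries ℤ)^(2*r) = (1+X)^a * (1+X)^(d+1) := by
      rw [← pow_add, show a + (d+1) = 2*r by omega]
    rw [hsplit, mul_assoc, onePlusX_mul_Gs, PowerSeries.coeff_mul,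
      Finset.Nat.sum_antidiagonal_eq_sum_range_succ_mk]
    have : ∀ u ∈ range (s+1),
        (PowerSeries.coeff u) ((1+X)^a) * (PowerSeries.coeff (s-u))
          (PowerSeries.mk fun n => ((d + n).choose d : ℤ))
        = (a.choose s * s.choose u : ℤ) := by
      intro u hu
      have hu' : u ≤ s := by have := Finset.mem_range.mp hu; omega
      rw [coeff_onePlusX_pow, PowerSeries.coeff_mk]
      have h1 : d + (s - u) = a - u := by omega
      have h2 : (a - u).choose d = (a - u).choose (s - u) := by
        rw [← Nat.choose_symm (by omega : d ≤ a - u)]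
        congr 1
        omega
      have h3 : a.choose s * s.choose u = a.choose u * (a-u).choose (s-u) :=
        Nat.choose_mul hu'
      rw [h1, h2]
      rw [← Nat.cast_mul, ← Nat.cast_mul, h3]
    rw [Finset.sum_congr rfl this, ← Finset.mul_sum]
    have : ∑ x ∈ range (s+1), (s.choose x : ℤ) = 2^s := by
      rw [← Nat.cast_sum, Nat.sum_range_choose]
      push_cast
      ring
    rw [this]
  have : (∑ k ∈ range l, ((r-1-k).choose (r-l) * (2*r).choose (2*k+1) : ℤ))
      = (2^(2*l-1) * (r+l-1).choose (2*l-1) : ℤ) := by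
    rw [← e1, e2]
    push_cast
    ring
  exact_mod_cast this

lemma star_nat (r l k : ℕ) (hk : k + 1 ≤ l) (hl : l ≤ r) :
    l.choose (k+1) * r.factorial
      = r.choose (k+1) * (r-1-k).choose (r-l) * l.factorial * (r-l).factorial := by
  have hcancel : ∀ x y : ℕ, x * ((k+1).factorial * (l-k-1).factorial)
      = y * ((k+1).factorial * (l-k-1).factorial) → x = y := fun x y hxy =>
    Nat.eq_of_mul_eq_mul_right (Nat.mul_pos (Nat.factorial_pos _) (Nat.factorial_pos _)) hxy
  apply hcancel
  have h1 : l.choose (k+1) * (k+1).factorial * (l-(k+1)).factorial = l.factorial :=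
    Nat.choose_mul_factorial_mul_factorial hk
  have h2 : (r-1-k).choose (r-l) * (r-l).factorial * ((r-1-k)-(r-l)).factorial = (r-1-k).factorial :=
    Nat.choose_mul_factorial_mul_factorial (by omega)
  have h3 : r.choose (k+1) * (k+1).factorial * (r-(k+1)).factorial = r.factorial :=
    Nat.choose_mul_factorial_mul_factorial (by omega)
  have e1 : l - (k+1) = l - k - 1 := by omega
  have e2 : (r-1-k)-(r-l) = l - k - 1 := by omega
  have e3 : r - (k+1) = r - 1 - k := by omega
  calc l.choose (k+1) * r.factorial * ((k+1).factorial * (l-k-1).factorial)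
      = (l.choose (k+1) * (k+1).factorial * (l-(k+1)).factorial) * r.factorial := by
        rw [e1]; ring
    _ = l.factorial * r.factorial := by rw [h1]
    _ = l.factorial * (r.choose (k+1) * (k+1).factorial * (r-(k+1)).factorial) := by rw [h3]
    _ = l.factorial * (r.choose (k+1) * (k+1).factorial *
          ((r-1-k).choose (r-l) * (r-l).factorial * ((r-1-k)-(r-l)).factorial)) := by
        rw [h2, e3]
    _ = r.choose (k+1) * (r-1-k).choose (r-l) * l.factorial * (r-l).factorial *
          ((k+1).factorial * (l-k-1).factorial) := by
        rw [e2]; ring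

lemma fin_nat (r l : ℕ) (hl1 : 1 ≤ l) (hl2 : l ≤ r) :
    (r+l) * (2*l).choose l * l.factorial * (r-l).factorial * (2^(2*l-1)) * (r+l-1).choose (2*l-1)
      = 4^l * l * (l+r).choose r * r.factorial := by
  have hcancel : ∀ x y : ℕ, x * ((2*l-1).factorial * l.factorial)
      = y * ((2*l-1).factorial * l.factorial) → x = y := fun x y hxy =>
    Nat.eq_of_mul_eq_mul_right (Nat.mul_pos (Nat.factorial_pos _) (Nat.factorial_pos _)) hxy
  apply hcancel
  have h1 : (2*l).choose l * l.factorial * l.factorial = (2*l).factorial := by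
    have := Nat.choose_mul_factorial_mul_factorial (show l ≤ 2*l by omega)
    rw [show 2*l - l = l by omega] at this
    exact this
  have h2 : (r+l-1).choose (2*l-1) * (2*l-1).factorial * (r-l).factorial = (r+l-1).factorial := by
    have := Nat.choose_mul_factorial_mul_factorial (show 2*l-1 ≤ r+l-1 by omega)
    rw [show r+l-1 - (2*l-1) = r - l by omega] at this
    exact this
  have h3 : (l+r).choose r * r.factorial * l.factorial = (l+r).factorial := by
    have := Nat.choose_mul_factorial_mul_factorial (show r ≤ l+r by omega)
    rw [show l+r - r = l by omega] at this
    exact this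
  have h4 : (r+l) * (r+l-1).factorial = (r+l).factorial := by
    rw [show r+l = (r+l-1)+1 by omega]
    rw [Nat.factorial_succ, show r+l-1+1-1 = r+l-1 by omega]
  have h5 : (2*l) * (2*l-1).factorial = (2*l).factorial := by
    rw [show 2*l = (2*l-1)+1 by omega]
    rw [Nat.factorial_succ, show 2*l-1+1-1 = 2*l-1 by omega]
  have h6 : 4^l = 2 * 2^(2*l-1) := by
    have h2l : (2:ℕ)^(2*l) = 2 * 2^(2*l-1) := by
      conv_lhs => rw [show 2*l = (2*l-1)+1 by omega]
      rw [pow_succ]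
      ring
    rw [show (4:ℕ) = 2^2 by norm_num, ← pow_mul, h2l]
  have h7 : (l+r).factorial = (r+l).factorial := by rw [Nat.add_comm]
  calc (r+l) * (2*l).choose l * l.factorial * (r-l).factorial * (2^(2*l-1)) * (r+l-1).choose (2*l-1)
        * ((2*l-1).factorial * l.factorial)
      = ((2*l).choose l * l.factorial * l.factorial) * (2^(2*l-1)) *
          ((r+l) * ((r+l-1).choose (2*l-1) * (2*l-1).factorial * (r-l).factorial)) := by ring
    _ = (2*l).factorial * 2^(2*l-1) * (r+l).factorial := by rw [h1, h2, h4]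
    _ = (2*l) * (2*l-1).factorial * 2^(2*l-1) * (r+l).factorial := by rw [h5]
    _ = (2 * 2^(2*l-1)) * l * ((l+r).choose r * r.factorial * l.factorial) * (2*l-1).factorial := by
        rw [h3, h7]; ring
    _ = 4^l * l * (l+r).choose r * r.factorial * ((2*l-1).factorial * l.factorial) := by
        rw [← h6]; ring

lemma nat_id_perk (r l k : ℕ) (hk : k + 1 ≤ l) (hl : l ≤ r) :
    l.choose k * (l-k) * r.factorial
      = r.choose k * (r-k) * ((r-1-k).choose (r-l)) * l.factorial * (r-l).factorial := by
  have a1 : l.choose (k+1) * (k+1) = l.choose k * (l - k) := Nat.choose_succ_right_eq l k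
  have a2 : r.choose (k+1) * (k+1) = r.choose k * (r - k) := Nat.choose_succ_right_eq r k
  have st := star_nat r l k hk hl
  calc l.choose k * (l-k) * r.factorial = (l.choose (k+1) * r.factorial) * (k+1) := by
        rw [← a1]; ring
    _ = (r.choose (k+1) * (r-1-k).choose (r-l) * l.factorial * (r-l).factorial) * (k+1) := by
        rw [st]
    _ = (r.choose (k+1) * (k+1)) * (r-1-k).choose (r-l) * l.factorial * (r-l).factorial := by
        ring
    _ = _ := by rw [a2]

lemma C1_eq (r l k : ℕ) (hk : k + 1 ≤ l) (hl : l ≤ r) :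
    C1 r l k = ((1 / 2 ^ (2 * l)) * (((r : ℝ) + l) / l) * ((2*l).choose l : ℝ) *
      (((l+r).choose r : ℝ))⁻¹ * ((l.factorial : ℝ) * ((r-l).factorial : ℝ) / (r.factorial : ℝ)))
      * (((r-1-k).choose (r-l) : ℝ) * ((2*r).choose (2*k+1) : ℝ)) := by
  have hkl : k ≤ l := by omega
  have hkr : k ≤ r := by omega
  have hrk0 : ((r:ℝ) - k) ≠ 0 := by
    have : (k:ℝ) < r := by exact_mod_cast (by omega : k < r)
    linarith
  have hchrk : ((r.choose k : ℝ)) ≠ 0 := Nat.cast_ne_zero.mpr (Nat.choose_pos hkr).ne'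
  have hfac : ((r.factorial : ℝ)) ≠ 0 := Nat.cast_ne_zero.mpr (Nat.factorial_pos r).ne'
  have hcast : ((l.choose k : ℝ)) * ((l:ℝ) - k) * (r.factorial : ℝ)
      = (r.choose k : ℝ) * ((r:ℝ) - k) * (((r-1-k).choose (r-l)) : ℝ) * (l.factorial : ℝ)
        * ((r-l).factorial : ℝ) := by
    have := nat_id_perk r l k hk hl
    have hc := congrArg (Nat.cast : ℕ → ℝ) this
    push_cast [Nat.cast_sub hkl, Nat.cast_sub hkr] at hc
    linarith [hc]
  have key : ((l:ℝ) - k)/((r:ℝ) - k) * (l.choose k : ℝ) * ((r.choose k : ℝ))⁻¹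
      = (((r-1-k).choose (r-l)) : ℝ) * (l.factorial : ℝ) * ((r-l).factorial : ℝ)
        / (r.factorial : ℝ) := by
    field_simp
    linear_combination hcast
  rw [C1]
  rw [show (1 / 2 ^ (2 * l) : ℝ) * (((r : ℝ) + (l : ℝ)) / (l : ℝ)) *
    (((l : ℝ) - (k : ℝ)) / ((r : ℝ) - (k : ℝ))) *
    (Nat.choose l k : ℝ) * ((Nat.choose r k : ℝ))⁻¹ * (Nat.choose (2 * l) l : ℝ) *
    ((Nat.choose (l + r) r : ℝ))⁻¹ * (Nat.choose (2 * r) (2 * k + 1) : ℝ)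
    = (1 / 2 ^ (2 * l) : ℝ) * (((r : ℝ) + (l : ℝ)) / (l : ℝ)) *
      ((((l : ℝ) - (k : ℝ)) / ((r : ℝ) - (k : ℝ))) *
      (Nat.choose l k : ℝ) * ((Nat.choose r k : ℝ))⁻¹) * (Nat.choose (2 * l) l : ℝ) *
      ((Nat.choose (l + r) r : ℝ))⁻¹ * (Nat.choose (2 * r) (2 * k + 1) : ℝ) by ring, key]
  ring

lemma sum_C1_eq_one (r l : ℕ) (hl1 : 1 ≤ l) (hl2 : l ≤ r) :
    ∑ k ∈ range l, C1 r l k = 1 := by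
  have hrw : ∀ k ∈ range l, C1 r l k
      = ((1 / 2 ^ (2 * l)) * (((r : ℝ) + l) / l) * ((2*l).choose l : ℝ) *
        (((l+r).choose r : ℝ))⁻¹ * ((l.factorial : ℝ) * ((r-l).factorial : ℝ) / (r.factorial : ℝ)))
        * (((r-1-k).choose (r-l) : ℝ) * ((2*r).choose (2*k+1) : ℝ)) := by
    intro k hk
    exact C1_eq r l k (Finset.mem_range.mp hk) hl2
  rw [Finset.sum_congr rfl hrw, ← Finset.mul_sum]
  have hsum : ∑ k ∈ range l, (((r-1-k).choose (r-l) : ℝ) * ((2*r).choose (2*k+1) : ℝ))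
      = ((2:ℝ)^(2*l-1) * ((r+l-1).choose (2*l-1) : ℝ)) := by
    have := key_nat r l hl1 hl2
    have hc := congrArg (Nat.cast : ℕ → ℝ) this
    push_cast at hc
    rw [← hc]
    try push_cast
    try ring
  rw [hsum]
  have hl0 : ((l:ℝ)) ≠ 0 := Nat.cast_ne_zero.mpr (by omega)
  have hch : (((l+r).choose r : ℝ)) ≠ 0 := Nat.cast_ne_zero.mpr (Nat.choose_pos (by omega)).ne'
  have hfac : ((r.factorial : ℝ)) ≠ 0 := Nat.cast_ne_zero.mpr (Nat.factorial_pos r).ne'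
  have hfin := congrArg (Nat.cast : ℕ → ℝ) (fin_nat r l hl1 hl2)
  push_cast at hfin
  have h4 : ((4:ℝ))^l = 2^(2*l) := by
    rw [show (4:ℝ) = 2^2 by norm_num, ← pow_mul]
  rw [h4] at hfin
  field_simp
  linear_combination hfin

lemma Copt_nonneg (r k : ℕ) : 0 ≤ Copt r k := by
  rw [Copt]; positivity

lemma C1_pos (r l k : ℕ) (hl1 : 1 ≤ l) (hl2 : l ≤ r) (hk : k + 1 ≤ l) : 0 < C1 r l k := by
  have h1 : (0:ℝ) < 1/2^(2*l) := by positivity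
  have hlR : (0:ℝ) < (l:ℝ) := by exact_mod_cast hl1
  have h2 : (0:ℝ) < ((r:ℝ)+l)/l := by
    have : (0:ℝ) < (r:ℝ) := by exact_mod_cast (by omega : 0 < r)
    positivity
  have h3 : (0:ℝ) < ((l:ℝ)-k)/((r:ℝ)-k) := by
    have hkl : (k:ℝ) < l := by exact_mod_cast (by omega : k < l)
    have hkr : (k:ℝ) < r := by exact_mod_cast (by omega : k < r)
    exact div_pos (by linarith) (by linarith)
  have hc1 : (0:ℝ) < (l.choose k : ℝ) := by exact_mod_cast Nat.choose_pos (by omega)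
  have hc2 : (0:ℝ) < ((r.choose k : ℝ))⁻¹ := by
    have : (0:ℝ) < (r.choose k : ℝ) := by exact_mod_cast Nat.choose_pos (by omega)
    exact inv_pos.mpr this
  have hc3 : (0:ℝ) < ((2*l).choose l : ℝ) := by exact_mod_cast Nat.choose_pos (by omega)
  have hc4 : (0:ℝ) < (((l+r).choose r : ℝ))⁻¹ := by
    have : (0:ℝ) < ((l+r).choose r : ℝ) := by exact_mod_cast Nat.choose_pos (by omega)
    exact inv_pos.mpr this
  have hc5 : (0:ℝ) < ((2*r).choose (2*k+1) : ℝ) := by exact_mod_cast Nat.choose_pos (by omega)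
  rw [C1]
  exact mul_pos (mul_pos (mul_pos (mul_pos (mul_pos (mul_pos (mul_pos h1 h2) h3) hc1) hc2) hc3) hc4) hc5

lemma C1_le_one (r l k : ℕ) (hl1 : 1 ≤ l) (hl2 : l ≤ r) (hk : k + 1 ≤ l) : C1 r l k ≤ 1 := by
  rw [← sum_C1_eq_one r l hl1 hl2]
  exact Finset.single_le_sum (fun i hi => (C1_pos r l i hl1 hl2 (Finset.mem_range.mp hi)).le)
    (Finset.mem_range.mpr (by omega))


set_option maxHeartbeats 2000000 in
/-- Weight adaptation to a left-hand discontinuity at `[x_{j-l₀-1}, x_{j-l₀}]`: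
the first `r-l₀` weights are `O(h^{2r-1})` and the remaining weights tend to the reflected
optimal weights `C^{r+l₀-1}_{l₀-1, r-1-k}` up to `O(h^{2r-1})`. -/
theorem weights_left_discontinuity (r : ℕ) (hr : 2 ≤ r) (l₀ : ℕ) (hl₀1 : 1 ≤ l₀)
    (hl₀2 : l₀ ≤ r - 1) (L m M₀ : ℝ) (hL : 0 ≤ L) (hm : 0 < m) (hmM : m ≤ M₀) :
    ∃ M > 0, ∃ h₀ > 0, ∀ h : ℝ, 0 < h → h < h₀ → ∀ x₀ : ℝ, ∀ j : ℤ, ∀ f : ℝ → ℝ,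
      m ≤ |f (nd h x₀ (j - l₀)) - f (nd h x₀ (j - l₀ - 1))| →
      |f (nd h x₀ (j - l₀)) - f (nd h x₀ (j - l₀ - 1))| ≤ M₀ →
      (∀ ξ : ℤ, ξ ≠ -(l₀ : ℤ) → -(r : ℤ) + 1 ≤ ξ → ξ ≤ (r : ℤ) - 1 →
        |f (nd h x₀ (j + ξ)) - f (nd h x₀ (j + ξ - 1))| ≤ L * h) →
      (∀ k : ℕ, k ≤ r - l₀ - 1 →
        0 ≤ omegaW h x₀ j r f k ∧ omegaW h x₀ j r f k ≤ M * h ^ (2 * r - 1)) ∧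
      (∀ k : ℕ, r - l₀ ≤ k → k ≤ r - 1 →
        |omegaW h x₀ j r f k - C1 r l₀ (r - 1 - k)| ≤ M * h ^ (2 * r - 1)) := by
  have hl₀r : l₀ ≤ r := by omega
  -- constants
  set P : ℝ := ∑ k ∈ Finset.range r, Copt r k with hP
  set Q : ℝ := ∑ k ∈ Finset.range r, ((∑ l ∈ Finset.Icc (k+1) (r-1), C1 r l k) +
      ∑ l ∈ Finset.range k, C1 r (r-l-1) (r-1-k)) with hQ
  have hQk_nn : ∀ k ∈ Finset.range r, 0 ≤ (∑ l ∈ Finset.Icc (k+1) (r-1), C1 r l k) +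
      ∑ l ∈ Finset.range k, C1 r (r-l-1) (r-1-k) := by
    intro k hk
    have hk' : k < r := Finset.mem_range.mp hk
    have t1 : 0 ≤ ∑ l ∈ Finset.Icc (k+1) (r-1), C1 r l k :=
      Finset.sum_nonneg (fun l hl => by
        have := Finset.mem_Icc.mp hl
        exact (C1_pos r l k (by omega) (by omega) (by omega)).le)
    have t2 : 0 ≤ ∑ l ∈ Finset.range k, C1 r (r-l-1) (r-1-k) :=
      Finset.sum_nonneg (fun l hl => by
        have := Finset.mem_range.mp hl
        exact (C1_pos r (r-l-1) (r-1-k) (by omega) (by omega) (by omega)).le)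
    linarith
  have hP_nn : 0 ≤ P := Finset.sum_nonneg (fun k _ => Copt_nonneg r k)
  have hQ_nn : 0 ≤ Q := Finset.sum_nonneg hQk_nn
  set A : ℝ := P + r * Q * L^(2*(2*r-1)) with hA
  have hA_nn : 0 ≤ A := by
    have : (0:ℝ) ≤ r * Q * L^(2*(2*r-1)) := by positivity
    linarith
  have hmT : (0:ℝ) < m^(2*(2*r-1)) := pow_pos hm _
  refine ⟨2*(A+1)/m^(2*(2*r-1)), by positivity, 1, one_pos, ?_⟩
  intro h hh0 hh1 x₀ j f hm1 hm2 hsmall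
  have ht0 : (0:ℝ) < h^(2*r-1) := pow_pos hh0 _
  have hti : (0:ℝ) < (h^(2*r-1))⁻¹ := inv_pos.mpr ht0
  have hht1 : h^(2*r-1) ≤ 1 := pow_le_one₀ hh0.le hh1.le
  have hJnn : ∀ ξ : ℤ, 0 ≤ Jf h x₀ j r f ξ := fun ξ => pow_nonneg (abs_nonneg _) _
  have hJsmall : ∀ ξ : ℤ, ξ ≠ -(l₀:ℤ) → -(r:ℤ)+1 ≤ ξ → ξ ≤ (r:ℤ)-1 →
      Jf h x₀ j r f ξ ≤ (L*h)^(2*(2*r-1)) :=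
    fun ξ h1 h2 h3 => pow_le_pow_left₀ (abs_nonneg _) (hsmall ξ h1 h2 h3) _
  have hJbig : m^(2*(2*r-1)) ≤ Jf h x₀ j r f (-(l₀:ℤ)) := by
    have e : Jf h x₀ j r f (-(l₀:ℤ))
        = |f (nd h x₀ (j - l₀)) - f (nd h x₀ (j - l₀ - 1))|^(2*(2*r-1)) := by
      rw [Jf, show j + -(l₀:ℤ) = j - l₀ by ring]
    rw [e]
    exact pow_le_pow_left₀ hm.le hm1 _
  set Jb : ℝ := Jf h x₀ j r f (-(l₀:ℤ)) with hJbdef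
  set bigc : ℝ := (h^(2*r-1))⁻¹ * Jb with hbigc
  set Rst : ℕ → ℝ := fun k => Copt r k + (h^(2*r-1))⁻¹ *
    ((∑ l ∈ Finset.Icc (k+1) (r-1), C1 r l k * Jf h x₀ j r f (l:ℤ)) +
     ∑ l ∈ (Finset.range k).erase (r-1-l₀),
        C1 r (r-l-1) (r-1-k) * Jf h x₀ j r f ((l:ℤ)-(r:ℤ)+1)) with hRst
  have hdecomp : ∀ k, k < r → alphaW h x₀ j r f k
      = (if r - l₀ ≤ k then C1 r l₀ (r-1-k) * bigc else 0) + Rst k := by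
    intro k hk
    simp only [hRst, alphaW]
    by_cases hcase : r - l₀ ≤ k
    · rw [if_pos hcase]
      have hmem : r-1-l₀ ∈ Finset.range k := Finset.mem_range.mpr (by omega)
      rw [← Finset.add_sum_erase _ _ hmem]
      have e1 : r - (r-1-l₀) - 1 = l₀ := by omega
      have e2 : ((r-1-l₀ : ℕ):ℤ) - (r:ℤ) + 1 = -(l₀:ℤ) := by omega
      rw [e1, e2, hbigc, hJbdef]
      ring
    · rw [if_neg hcase, zero_add]
      have herase : (Finset.range k).erase (r-1-l₀) = Finset.range k :=
        Finset.erase_eq_of_notMem (by rw [Finset.mem_range]; omega)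
      rw [herase]
  
  have hhid : (h^(2*r-1))⁻¹ * (L*h)^(2*(2*r-1)) = L^(2*(2*r-1)) * h^(2*r-1) := by
    rw [mul_pow, show 2*(2*r-1) = (2*r-1)+(2*r-1) by ring, pow_add]
    field_simp
    ring
  have hRst_nn : ∀ k, k < r → 0 ≤ Rst k := by
    intro k hk
    simp only [hRst]
    have t1 : 0 ≤ ∑ l ∈ Finset.Icc (k+1) (r-1), C1 r l k * Jf h x₀ j r f (l:ℤ) :=
      Finset.sum_nonneg (fun l hl => by
        have := Finset.mem_Icc.mp hl
        exact mul_nonneg (C1_pos r l k (by omega) (by omega) (by omega)).le (hJnn _))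
    have t2 : 0 ≤ ∑ l ∈ (Finset.range k).erase (r-1-l₀),
        C1 r (r-l-1) (r-1-k) * Jf h x₀ j r f ((l:ℤ)-(r:ℤ)+1) :=
      Finset.sum_nonneg (fun l hl => by
        have := Finset.mem_range.mp (Finset.mem_of_mem_erase hl)
        exact mul_nonneg (C1_pos r (r-l-1) (r-1-k) (by omega) (by omega) (by omega)).le (hJnn _))
    have := Copt_nonneg r k
    nlinarith [hti.le]
  have hRst_ub : ∀ k, k < r → Rst k ≤ Copt r k + Q * L^(2*(2*r-1)) * h^(2*r-1) := by
    intro k hk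
    simp only [hRst]
    have hLhT : (0:ℝ) ≤ (L*h)^(2*(2*r-1)) := by positivity
    have hS1 : (∑ l ∈ Finset.Icc (k+1) (r-1), C1 r l k * Jf h x₀ j r f (l:ℤ))
        ≤ (∑ l ∈ Finset.Icc (k+1) (r-1), C1 r l k) * (L*h)^(2*(2*r-1)) := by
      rw [Finset.sum_mul]
      apply Finset.sum_le_sum
      intro l hl
      have hmem := Finset.mem_Icc.mp hl
      have hpos := C1_pos r l k (by omega) (by omega) (by omega)
      have hJ : Jf h x₀ j r f (l:ℤ) ≤ (L*h)^(2*(2*r-1)) := by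
        apply hJsmall <;> omega
      exact mul_le_mul_of_nonneg_left hJ hpos.le
    have hS2 : (∑ l ∈ (Finset.range k).erase (r-1-l₀),
          C1 r (r-l-1) (r-1-k) * Jf h x₀ j r f ((l:ℤ)-(r:ℤ)+1))
        ≤ (∑ l ∈ (Finset.range k).erase (r-1-l₀), C1 r (r-l-1) (r-1-k)) * (L*h)^(2*(2*r-1)) := by
      rw [Finset.sum_mul]
      apply Finset.sum_le_sum
      intro l hl
      have hne := Finset.ne_of_mem_erase hl
      have hmem := Finset.mem_range.mp (Finset.mem_of_mem_erase hl)
      have hpos := C1_pos r (r-l-1) (r-1-k) (by omega) (by omega) (by omega)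
      have hJ : Jf h x₀ j r f ((l:ℤ)-(r:ℤ)+1) ≤ (L*h)^(2*(2*r-1)) := by
        apply hJsmall <;> omega
      exact mul_le_mul_of_nonneg_left hJ hpos.le
    have hcoef : (∑ l ∈ Finset.Icc (k+1) (r-1), C1 r l k) +
        (∑ l ∈ (Finset.range k).erase (r-1-l₀), C1 r (r-l-1) (r-1-k)) ≤ Q := by
      have h1 : (∑ l ∈ (Finset.range k).erase (r-1-l₀), C1 r (r-l-1) (r-1-k))
          ≤ ∑ l ∈ Finset.range k, C1 r (r-l-1) (r-1-k) := by
        apply Finset.sum_le_sum_of_subset_of_nonneg (Finset.erase_subset _ _)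
        intro l hl _
        have := Finset.mem_range.mp hl
        exact (C1_pos r (r-l-1) (r-1-k) (by omega) (by omega) (by omega)).le
      have h2 : (∑ l ∈ Finset.Icc (k+1) (r-1), C1 r l k) +
          (∑ l ∈ Finset.range k, C1 r (r-l-1) (r-1-k)) ≤ Q :=
        Finset.single_le_sum hQk_nn (Finset.mem_range.mpr hk)
      linarith
    have hsum_nn1 : (0:ℝ) ≤ ∑ l ∈ Finset.Icc (k+1) (r-1), C1 r l k :=
      Finset.sum_nonneg (fun l hl => by
        have := Finset.mem_Icc.mp hl
        exact (C1_pos r l k (by omega) (by omega) (by omega)).le)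
    have hchain : (∑ l ∈ Finset.Icc (k+1) (r-1), C1 r l k * Jf h x₀ j r f (l:ℤ)) +
        (∑ l ∈ (Finset.range k).erase (r-1-l₀),
          C1 r (r-l-1) (r-1-k) * Jf h x₀ j r f ((l:ℤ)-(r:ℤ)+1))
        ≤ Q * (L*h)^(2*(2*r-1)) := by
      nlinarith
    have hfinal : (h^(2*r-1))⁻¹ * ((∑ l ∈ Finset.Icc (k+1) (r-1), C1 r l k * Jf h x₀ j r f (l:ℤ)) +
        (∑ l ∈ (Finset.range k).erase (r-1-l₀),
          C1 r (r-l-1) (r-1-k) * Jf h x₀ j r f ((l:ℤ)-(r:ℤ)+1)))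
        ≤ Q * L^(2*(2*r-1)) * h^(2*r-1) := by
      calc (h^(2*r-1))⁻¹ * _ ≤ (h^(2*r-1))⁻¹ * (Q * (L*h)^(2*(2*r-1))) :=
            mul_le_mul_of_nonneg_left hchain hti.le
        _ = Q * ((h^(2*r-1))⁻¹ * (L*h)^(2*(2*r-1))) := by ring
        _ = Q * (L^(2*(2*r-1)) * h^(2*r-1)) := by rw [hhid]
        _ = Q * L^(2*(2*r-1)) * h^(2*r-1) := by ring
    linarith
  set B : ℝ := ∑ i ∈ Finset.range r, Rst i with hB
  have hB_nn : 0 ≤ B :=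
    Finset.sum_nonneg (fun i hi => hRst_nn i (Finset.mem_range.mp hi))
  have hB_ub : B ≤ A := by
    have h1 : B ≤ ∑ i ∈ Finset.range r, (Copt r i + Q * L^(2*(2*r-1)) * h^(2*r-1)) :=
      Finset.sum_le_sum (fun i hi => hRst_ub i (Finset.mem_range.mp hi))
    rw [Finset.sum_add_distrib, Finset.sum_const, Finset.card_range, nsmul_eq_mul] at h1
    have hLT : (0:ℝ) ≤ L^(2*(2*r-1)) := by positivity
    have hrR : (1:ℝ) ≤ (r:ℝ) := by exact_mod_cast (by omega : 1 ≤ r)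
    have : (r:ℝ) * (Q * L^(2*(2*r-1)) * h^(2*r-1)) ≤ (r:ℝ) * Q * L^(2*(2*r-1)) := by
      have key : 0 ≤ ((r:ℝ)*Q*L^(2*(2*r-1))) * (1 - h^(2*r-1)) :=
        mul_nonneg (by positivity) (by linarith)
      nlinarith [key]
    rw [hA, hP]
    linarith
  have hite : ∑ i ∈ Finset.range r, (if r - l₀ ≤ i then C1 r l₀ (r-1-i) * bigc else 0)
      = bigc := by
    have step1 : ∑ i ∈ Finset.range r, (if r - l₀ ≤ i then C1 r l₀ (r-1-i) * bigc else 0)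
        = ∑ i ∈ Finset.Ico (r-l₀) r, C1 r l₀ (r-1-i) * bigc := by
      rw [Finset.range_eq_Ico, ← Finset.sum_Ico_consecutive _ (Nat.zero_le (r-l₀)) (by omega : r-l₀ ≤ r)]
      have h1 : ∀ i ∈ Finset.Ico 0 (r-l₀), (if r-l₀ ≤ i then C1 r l₀ (r-1-i) * bigc else 0) = 0 :=
        fun i hi => if_neg (by have := Finset.mem_Ico.mp hi; omega)
      have h2 : ∀ i ∈ Finset.Ico (r-l₀) r, (if r-l₀ ≤ i then C1 r l₀ (r-1-i) * bigc else 0)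
          = C1 r l₀ (r-1-i) * bigc :=
        fun i hi => if_pos (Finset.mem_Ico.mp hi).1
      rw [Finset.sum_congr rfl h1, Finset.sum_congr rfl h2, Finset.sum_const_zero, zero_add]
    have step2 : ∑ i ∈ Finset.Ico (r-l₀) r, C1 r l₀ (r-1-i) = ∑ k ∈ Finset.range l₀, C1 r l₀ k := by
      apply Finset.sum_nbij' (fun i => r-1-i) (fun k => r-1-k)
      · intro a ha
        have := Finset.mem_Ico.mp ha
        exact Finset.mem_range.mpr (by omega)
      · intro b hb
        have := Finset.mem_range.mp hb
        exact Finset.mem_Ico.mpr (by omega)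
      · intro a ha
        have := Finset.mem_Ico.mp ha
        omega
      · intro b hb
        have := Finset.mem_range.mp hb
        omega
      · intro a _
        rfl
    rw [step1, ← Finset.sum_mul, step2, sum_C1_eq_one r l₀ hl₀1 hl₀r, one_mul]
  set Dtot : ℝ := ∑ i ∈ Finset.range r, alphaW h x₀ j r f i with hDtot
  have hDtot_eq : Dtot = bigc + B := by
    rw [hDtot, hB, Finset.sum_congr rfl (fun i hi => hdecomp i (Finset.mem_range.mp hi)),
      Finset.sum_add_distrib, hite]
  have hbigc_lb : (h^(2*r-1))⁻¹ * m^(2*(2*r-1)) ≤ bigc := by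
    rw [hbigc]
    exact mul_le_mul_of_nonneg_left hJbig hti.le
  have hd0_pos : (0:ℝ) < (h^(2*r-1))⁻¹ * m^(2*(2*r-1)) := by positivity
  have hDtot_lb : (h^(2*r-1))⁻¹ * m^(2*(2*r-1)) ≤ Dtot := by
    rw [hDtot_eq]; linarith
  have hDtot_pos : 0 < Dtot := lt_of_lt_of_le hd0_pos hDtot_lb
  have hfrac : ∀ x : ℝ, 0 ≤ x → x ≤ A + A →
      x / Dtot ≤ (2*(A+1)/m^(2*(2*r-1))) * h^(2*r-1) := by
    intro x hx0 hxA
    have h1 : x / Dtot ≤ x / ((h^(2*r-1))⁻¹ * m^(2*(2*r-1))) := by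
      gcongr
    have h2 : x / ((h^(2*r-1))⁻¹ * m^(2*(2*r-1))) = x * h^(2*r-1) / m^(2*(2*r-1)) := by
      field_simp
      try ring
    have h3 : x * h^(2*r-1) / m^(2*(2*r-1)) ≤ (2*(A+1)) * h^(2*r-1) / m^(2*(2*r-1)) := by
      gcongr
      linarith
    have h4 : (2*(A+1)) * h^(2*r-1) / m^(2*(2*r-1)) = (2*(A+1)/m^(2*(2*r-1))) * h^(2*r-1) := by
      ring
    rw [h2] at h1
    rw [h4] at h3
    linarith
  constructor
  · intro k hk
    have hk' : k < r := by omega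
    have hkcase : ¬ (r - l₀ ≤ k) := by omega
    have homega : omegaW h x₀ j r f k = Rst k / Dtot := by
      rw [omegaW, hdecomp k hk', if_neg hkcase, zero_add]
    rw [homega]
    constructor
    · exact div_nonneg (hRst_nn k hk') hDtot_pos.le
    · apply hfrac _ (hRst_nn k hk')
      have h1 := hRst_ub k hk'
      have h2 : Copt r k ≤ P :=
        Finset.single_le_sum (fun i _ => Copt_nonneg r i) (Finset.mem_range.mpr hk')
      have hLT : (0:ℝ) ≤ L^(2*(2*r-1)) := by positivity
      have hrR : (1:ℝ) ≤ (r:ℝ) := by exact_mod_cast (by omega : 1 ≤ r)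
      have h3 : Q * L^(2*(2*r-1)) * h^(2*r-1) ≤ (r:ℝ) * Q * L^(2*(2*r-1)) := by
        have key : 0 ≤ (Q*L^(2*(2*r-1))) * ((r:ℝ) - h^(2*r-1)) :=
          mul_nonneg (mul_nonneg hQ_nn hLT) (by linarith)
        nlinarith [key]
      rw [hA] at *
      linarith
  · intro k hk1 hk2
    have hk' : k < r := by omega
    have hc1 : 0 < C1 r l₀ (r-1-k) := C1_pos r l₀ (r-1-k) hl₀1 hl₀r (by omega)
    have hc2 : C1 r l₀ (r-1-k) ≤ 1 := C1_le_one r l₀ (r-1-k) hl₀1 hl₀r (by omega)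
    have hOm : omegaW h x₀ j r f k - C1 r l₀ (r-1-k)
        = (Rst k - C1 r l₀ (r-1-k) * B) / Dtot := by
      have hne : bigc + B ≠ 0 := by rw [← hDtot_eq]; exact hDtot_pos.ne'
      rw [omegaW, hdecomp k hk', ← hDtot, hDtot_eq, if_pos hk1]
      field_simp [hne]
      ring
    rw [hOm, abs_div, abs_of_pos hDtot_pos]
    apply hfrac
    · exact abs_nonneg _
    · have hRnn := hRst_nn k hk'
      have hRub : Rst k ≤ A := by
        have h1 := hRst_ub k hk'
        have h2 : Copt r k ≤ P :=
          Finset.single_le_sum (fun i _ => Copt_nonneg r i) (Finset.mem_range.mpr hk')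
        have hLT : (0:ℝ) ≤ L^(2*(2*r-1)) := by positivity
        have hrR : (1:ℝ) ≤ (r:ℝ) := by exact_mod_cast (by omega : 1 ≤ r)
        have h3 : Q * L^(2*(2*r-1)) * h^(2*r-1) ≤ (r:ℝ) * Q * L^(2*(2*r-1)) := by
          have key : 0 ≤ (Q*L^(2*(2*r-1))) * ((r:ℝ) - h^(2*r-1)) :=
            mul_nonneg (mul_nonneg hQ_nn hLT) (by linarith)
          nlinarith [key]
        rw [hA] at *
        linarith
      rw [abs_le]
      constructor
      · nlinarith
      · nlinarith
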